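/- Let Θ ⊆ ℝ^m be convex, d₀, d₁ : Θ → ℝ convex, θ ∈ Θ, y ∈ (0,1). Suppose (θ̂⁰, θ̂¹) ∈ Θ² with (1−y)θ̂⁰ + yθ̂¹ = θ minimizes (1−y)d₀(θ⁰) + y d₁(θ¹) over all such pairs, and both θ̂⁰, θ̂¹ lie in the interior of Θ. Then the subdifferentials ∂d₀(θ̂⁰) and ∂d₁(θ̂¹) have a common element. -/

import Mathlib

open Set

/-- The subdifferential of `f` (relative to the domain `s`) at `x`. -/
def subdiff {m : ℕ} (f : EuclideanSpace ℝ (Fin m) → ℝ) (s : Set (EuclideanSpace ℝ (Fin m)))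
    (x : EuclideanSpace ℝ (Fin m)) : Set (EuclideanSpace ℝ (Fin m)) :=
  {v | ∀ z ∈ s, f x + (inner ℝ v (z - x) : ℝ) ≤ f z}

lemma aux_convexOn {m : ℕ} {s : Set (EuclideanSpace ℝ (Fin m))}
    {f : EuclideanSpace ℝ (Fin m) → ℝ} (hf : ConvexOn ℝ s f)
    (x₀ : EuclideanSpace ℝ (Fin m)) (c r k : ℝ) (hr : 0 ≤ r) :
    ConvexOn ℝ {w | x₀ + c • w ∈ s} (fun w => r * (f (x₀ + c • w) - k)) := by
  have key : ∀ (a b : ℝ), a + b = 1 → ∀ w1 w2 : EuclideanSpace ℝ (Fin m),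
      x₀ + c • (a • w1 + b • w2) = a • (x₀ + c • w1) + b • (x₀ + c • w2) := by
    intro a b hab w1 w2
    calc x₀ + c • (a • w1 + b • w2) = (a + b) • x₀ + c • (a • w1 + b • w2) := by
          rw [hab, one_smul]
      _ = a • (x₀ + c • w1) + b • (x₀ + c • w2) := by module
  constructor
  · intro w1 h1 w2 h2 a b ha hb hab
    simp only [mem_setOf_eq] at *
    rw [key a b hab w1 w2]
    exact hf.1 h1 h2 ha hb hab
  · intro w1 h1 w2 h2 a b ha hb hab
    simp only [mem_setOf_eq, smul_eq_mul] at *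
    rw [key a b hab w1 w2]
    have h := hf.2 h1 h2 ha hb hab
    simp only [smul_eq_mul] at h
    calc r * (f (a • (x₀ + c • w1) + b • (x₀ + c • w2)) - k)
        ≤ r * ((a * f (x₀ + c • w1) + b * f (x₀ + c • w2)) - k) :=
          mul_le_mul_of_nonneg_left (sub_le_sub_right h k) hr
      _ = a * (r * (f (x₀ + c • w1) - k)) + b * (r * (f (x₀ + c • w2) - k)) := by
          linear_combination r * k * hab

set_option maxHeartbeats 1000000 in
theorem minimizer_common_subgradient
    (m : ℕ) (Θ : Set (EuclideanSpace ℝ (Fin m))) (hΘ : Convex ℝ Θ)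
    (d₀ d₁ : EuclideanSpace ℝ (Fin m) → ℝ)
    (hd₀ : ConvexOn ℝ Θ d₀) (hd₁ : ConvexOn ℝ Θ d₁)
    (θ : EuclideanSpace ℝ (Fin m)) (hθ : θ ∈ Θ) (y : ℝ) (hy : y ∈ Ioo (0:ℝ) 1)
    (θ0 θ1 : EuclideanSpace ℝ (Fin m)) (hθ0 : θ0 ∈ Θ) (hθ1 : θ1 ∈ Θ)
    (hconstr : (1 - y) • θ0 + y • θ1 = θ)
    (hint0 : θ0 ∈ interior Θ) (hint1 : θ1 ∈ interior Θ)
    (hmin : ∀ t0 ∈ Θ, ∀ t1 ∈ Θ, (1 - y) • t0 + y • t1 = θ →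
      (1 - y) * d₀ θ0 + y * d₁ θ1 ≤ (1 - y) * d₀ t0 + y * d₁ t1) :
    (subdiff d₀ Θ θ0 ∩ subdiff d₁ Θ θ1).Nonempty := by
  obtain ⟨hy0, hy1⟩ := hy
  have hy1' : 0 < 1 - y := by linarith
  -- the two functions
  set f₀ : (EuclideanSpace ℝ (Fin m)) → ℝ := fun w => (1 - y) * (d₀ (θ0 + y • w) - d₀ θ0) with hf₀def
  set f₁ : (EuclideanSpace ℝ (Fin m)) → ℝ := fun w => y * (d₁ (θ1 + (-(1 - y)) • w) - d₁ θ1) with hf₁def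
  set U : Set (EuclideanSpace ℝ (Fin m)) := {w | θ0 + y • w ∈ interior Θ} with hUdef
  set V : Set (EuclideanSpace ℝ (Fin m)) := {w | θ1 + (-(1 - y)) • w ∈ Θ} with hVdef
  have hd₀' : ConvexOn ℝ (interior Θ) d₀ := hd₀.subset interior_subset hΘ.interior
  have hcf₀ : ConvexOn ℝ U f₀ := aux_convexOn hd₀' θ0 y (1 - y) (d₀ θ0) hy1'.le
  have hcf₁ : ConvexOn ℝ V f₁ := aux_convexOn hd₁ θ1 (-(1 - y)) y (d₁ θ1) hy0.le
  -- the two sets in (EuclideanSpace ℝ (Fin m)) × ℝ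
  set S₀ : Set ((EuclideanSpace ℝ (Fin m)) × ℝ) := {p | p.1 ∈ U ∧ f₀ p.1 < p.2} with hS₀def
  set S₁ : Set ((EuclideanSpace ℝ (Fin m)) × ℝ) := {p | p.1 ∈ V ∧ p.2 ≤ (-f₁) p.1} with hS₁def
  have hS₀conv : Convex ℝ S₀ := hcf₀.convex_strict_epigraph
  have hS₁conv : Convex ℝ S₁ := hcf₁.neg.convex_hypograph
  -- openness of S₀
  have hmap : Continuous (fun w : (EuclideanSpace ℝ (Fin m)) => θ0 + y • w) :=
    continuous_const.add (continuous_id.const_smul y)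
  have hUopen : IsOpen U := isOpen_interior.preimage hmap
  have hd₀cont : ContinuousOn d₀ (interior Θ) := hd₀'.continuousOn isOpen_interior
  have hf₀cont : ContinuousOn f₀ U := by
    apply ContinuousOn.mul continuousOn_const
    exact (hd₀cont.comp hmap.continuousOn (fun w hw => hw)).sub continuousOn_const
  have hS₀open : IsOpen S₀ := by
    rw [isOpen_iff_mem_nhds]
    rintro ⟨w, t⟩ ⟨hwU, hlt⟩
    have hca : ContinuousAt f₀ w := hf₀cont.continuousAt (hUopen.mem_nhds hwU)
    have hca2 : ContinuousAt (fun p : (EuclideanSpace ℝ (Fin m)) × ℝ => p.2 - f₀ p.1) (w, t) :=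
      continuousAt_snd.sub (by have := ContinuousAt.comp (f := Prod.fst) (x := (w, t)) hca continuousAt_fst; exact this)
    have h1 : {p : (EuclideanSpace ℝ (Fin m)) × ℝ | 0 < p.2 - f₀ p.1} ∈ nhds (w, t) :=
      hca2.preimage_mem_nhds (Ioi_mem_nhds (by simpa using hlt))
    have h2 : (U ×ˢ (univ : Set ℝ)) ∈ nhds (w, t) :=
      (hUopen.prod isOpen_univ).mem_nhds ⟨hwU, trivial⟩
    filter_upwards [h1, h2] with p hp1 hp2
    exact ⟨hp2.1, by simpa using hp1⟩
  -- disjointness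
  have hdisj : Disjoint S₀ S₁ := by
    rw [Set.disjoint_left]
    rintro ⟨w, t⟩ ⟨hwU, h0⟩ ⟨hwV, h1⟩
    have ht0 : θ0 + y • w ∈ Θ := interior_subset hwU
    have ht1 : θ1 + (-(1 - y)) • w ∈ Θ := hwV
    have hc : (1 - y) • (θ0 + y • w) + y • (θ1 + (-(1 - y)) • w) = θ := by
      rw [← hconstr]; module
    have := hmin _ ht0 _ ht1 hc
    simp only [Set.mem_setOf_eq, Pi.neg_apply, hf₀def, hf₁def] at h0 h1
    nlinarith
  -- separation
  obtain ⟨F, u, hFs, hFt⟩ := geometric_hahn_banach_open hS₀conv hS₀open hS₁conv hdisj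
  set c : ℝ := F ((0 : (EuclideanSpace ℝ (Fin m))), (1 : ℝ)) with hcdef
  have hF : ∀ (w : (EuclideanSpace ℝ (Fin m))) (t : ℝ), F (w, t) = F (w, 0) + t * c := by
    intro w t
    have hsplit : ((w, t) : (EuclideanSpace ℝ (Fin m)) × ℝ) = (w, 0) + t • ((0 : (EuclideanSpace ℝ (Fin m))), (1 : ℝ)) := by
      simp [Prod.ext_iff]
    rw [hsplit, map_add, map_smul, smul_eq_mul, hcdef]
  have hF00 : F ((0 : (EuclideanSpace ℝ (Fin m))), (0 : ℝ)) = 0 := map_zero F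
  -- u ≤ 0
  have h01 : ((0 : (EuclideanSpace ℝ (Fin m))), (0 : ℝ)) ∈ S₁ := by
    constructor
    · show θ1 + (-(1 - y)) • (0 : (EuclideanSpace ℝ (Fin m))) ∈ Θ
      simpa using hθ1
    · show (0 : ℝ) ≤ -f₁ 0
      simp [hf₁def]
  have hu0 : u ≤ 0 := le_of_le_of_eq (hFt _ h01) hF00
  -- points (0, ε) ∈ S₀
  have hε : ∀ ε : ℝ, 0 < ε → ε * c < u := by
    intro ε hεpos
    have h0ε : ((0 : (EuclideanSpace ℝ (Fin m))), ε) ∈ S₀ := by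
      constructor
      · show θ0 + y • (0 : (EuclideanSpace ℝ (Fin m))) ∈ interior Θ
        simpa using hint0
      · show f₀ 0 < ε
        simp [hf₀def]
        nlinarith
    have := hFs _ h0ε
    rwa [hF, hF00, zero_add] at this
  have hc_neg : c < 0 := lt_of_lt_of_le (by simpa using hε 1 one_pos) hu0
  have hcne : c ≠ 0 := ne_of_lt hc_neg
  have hu_eq : u = 0 := by
    by_contra h
    have hu_lt : u < 0 := lt_of_le_of_ne hu0 h
    have hεpos : 0 < u / (2 * c) := div_pos_iff.mpr (Or.inr ⟨hu_lt, by linarith⟩)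
    have := hε _ hεpos
    have heq : u / (2 * c) * c = u / 2 := by
      field_simp
    rw [heq] at this
    linarith
  -- key inequality K0
  have hK0 : ∀ w ∈ U, F (w, 0) + c * f₀ w ≤ 0 := by
    intro w hw
    by_contra h
    push_neg at h
    have hcpos : 0 < -c := by linarith
    have hpos : 0 < (F (w, 0) + c * f₀ w) / (2 * (-c)) :=
      div_pos h (by linarith)
    have hmem : ((w, f₀ w + (F (w, 0) + c * f₀ w) / (2 * (-c))) :
        (EuclideanSpace ℝ (Fin m)) × ℝ) ∈ S₀ := ⟨hw, by linarith⟩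
    have hlt := hFs _ hmem
    rw [hF, hu_eq] at hlt
    have heq : (F (w, 0) + c * f₀ w) / (2 * (-c)) * c = -((F (w, 0) + c * f₀ w) / 2) := by
      field_simp
    rw [add_mul, heq] at hlt
    nlinarith [hlt, h]
  -- key inequality K1
  have hK1 : ∀ w ∈ V, 0 ≤ F (w, 0) - f₁ w * c := by
    intro w hw
    have hmem : ((w, -f₁ w) : (EuclideanSpace ℝ (Fin m)) × ℝ) ∈ S₁ := ⟨hw, le_refl _⟩
    have := hFt _ hmem
    rw [hF, hu_eq] at this
    linarith
  -- the subgradient vector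
  obtain ⟨v₀, hv₀⟩ : ∃ v₀ : EuclideanSpace ℝ (Fin m),
      ∀ w : EuclideanSpace ℝ (Fin m), (inner ℝ v₀ w : ℝ) = F (w, 0) := by
    refine ⟨(InnerProductSpace.toDual ℝ (EuclideanSpace ℝ (Fin m))).symm
      (F.comp (ContinuousLinearMap.inl ℝ (EuclideanSpace ℝ (Fin m)) ℝ)), fun w => ?_⟩
    rw [InnerProductSpace.toDual_symm_apply]
    rfl
  set P : ℝ := (1 - y) * y * (-c) with hPdef
  have hPpos : 0 < P := by
    have : 0 < -c := by linarith
    positivity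
  refine ⟨P⁻¹ • v₀, ?_, ?_⟩
  · -- subgradient of d₀ at θ0
    -- first on the interior
    have hintcase : ∀ z ∈ interior Θ, d₀ θ0 + (inner ℝ (P⁻¹ • v₀) (z - θ0) : ℝ) ≤ d₀ z := by
      intro z hz
      set w : (EuclideanSpace ℝ (Fin m)) := y⁻¹ • (z - θ0) with hwdef
      have hww : θ0 + y • w = z := by
        rw [hwdef, smul_smul, mul_inv_cancel₀ (ne_of_gt hy0), one_smul]
        abel
      have hwU : w ∈ U := by
        show θ0 + y • w ∈ interior Θ
        rw [hww]; exact hz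
      have h := hK0 w hwU
      have hf₀w : f₀ w = (1 - y) * (d₀ z - d₀ θ0) := by
        simp only [hf₀def]
        rw [hww]
      have hFw : F (w, 0) = y⁻¹ * (inner ℝ v₀ (z - θ0) : ℝ) := by
        rw [← hv₀ w, hwdef, real_inner_smul_right]
      rw [hf₀w, hFw] at h
      set I : ℝ := (inner ℝ v₀ (z - θ0) : ℝ) with hIdef
      have hinner : (inner ℝ (P⁻¹ • v₀) (z - θ0) : ℝ) = P⁻¹ * I :=
        real_inner_smul_left _ _ _
      rw [hinner]
      have hgoal : P⁻¹ * I ≤ d₀ z - d₀ θ0 := by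
        rw [inv_mul_le_iff₀ hPpos, hPdef]
        -- from h : y⁻¹ * I + c * ((1-y) * (d₀ z - d₀ θ0)) ≤ 0
        have h2 : I ≤ y * (-c) * ((1 - y) * (d₀ z - d₀ θ0)) := by
          have h3 : y⁻¹ * I ≤ (-c) * ((1 - y) * (d₀ z - d₀ θ0)) := by linarith
          have h4 := mul_le_mul_of_nonneg_left h3 hy0.le
          rw [← mul_assoc, mul_inv_cancel₀ (ne_of_gt hy0), one_mul] at h4
          linarith [h4]
        nlinarith [h2]
      linarith
    intro z hz
    have hmid : (2⁻¹ : ℝ) • θ0 + (2⁻¹ : ℝ) • z ∈ interior Θ := by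
      apply hΘ.openSegment_interior_self_subset_interior hint0 hz
      exact ⟨2⁻¹, 2⁻¹, by norm_num, by norm_num, by norm_num, rfl⟩
    have h1 := hintcase _ hmid
    have hsub : ((2⁻¹ : ℝ) • θ0 + (2⁻¹ : ℝ) • z) - θ0 = (2⁻¹ : ℝ) • (z - θ0) := by
      module
    rw [hsub, real_inner_smul_right] at h1
    have h2 := hd₀.2 hθ0 hz (by norm_num : (0:ℝ) ≤ 2⁻¹) (by norm_num : (0:ℝ) ≤ 2⁻¹)
      (by norm_num : (2⁻¹ : ℝ) + 2⁻¹ = 1)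
    simp only [smul_eq_mul] at h2
    linarith
  · -- subgradient of d₁ at θ1
    intro z hz
    set w : (EuclideanSpace ℝ (Fin m)) := (-(1 - y))⁻¹ • (z - θ1) with hwdef
    have hww : θ1 + (-(1 - y)) • w = z := by
      rw [hwdef, smul_smul, mul_inv_cancel₀ (by linarith : -(1 - y) ≠ (0:ℝ)), one_smul]
      abel
    have hwV : w ∈ V := by
      show θ1 + (-(1 - y)) • w ∈ Θ
      rw [hww]; exact hz
    have h := hK1 w hwV
    have hf₁w : f₁ w = y * (d₁ z - d₁ θ1) := by
      simp only [hf₁def]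
      rw [hww]
    have hFw : F (w, 0) = (-(1 - y))⁻¹ * (inner ℝ v₀ (z - θ1) : ℝ) := by
      rw [← hv₀ w, hwdef, real_inner_smul_right]
    rw [hf₁w, hFw] at h
    set I : ℝ := (inner ℝ v₀ (z - θ1) : ℝ) with hIdef
    have hinner : (inner ℝ (P⁻¹ • v₀) (z - θ1) : ℝ) = P⁻¹ * I :=
      real_inner_smul_left _ _ _
    rw [hinner]
    have hgoal : P⁻¹ * I ≤ d₁ z - d₁ θ1 := by
      rw [inv_mul_le_iff₀ hPpos, hPdef]
      -- h : 0 ≤ (-(1-y))⁻¹ * I - y * (d₁ z - d₁ θ1) * c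
      have hinv : (-(1 - y))⁻¹ = -(1 - y)⁻¹ := by
        rw [inv_neg]
      rw [hinv] at h
      have h3 : (1 - y)⁻¹ * I ≤ -(y * (d₁ z - d₁ θ1) * c) := by linarith
      have h4 := mul_le_mul_of_nonneg_left h3 hy1'.le
      rw [← mul_assoc, mul_inv_cancel₀ (ne_of_gt hy1'), one_mul] at h4
      nlinarith [h4]
    linarith
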